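/- arXiv:0706.2603 — 2 statements merged into one kernel-verified Lean document; each statement's English description precedes it below -/
import Mathlib

section
/- Given a bounded self-adjoint operator T on H and a hidden observable f with σ(f) = T, there exists a hidden observable g that agrees with f outside a measure-zero pseudo-Borel subset of H, satisfies σ(g) = T, and whose image has closure equal to the spectrum of T: closure(g(H)) = spec[T]. -/
open MeasureTheory

noncomputable section

namespace HiddenVar

variable {H : Type*} [NormedAddCommGroup H] [InnerProductSpace ℂ H] [CompleteSpace H]

/-- `η` is an admissible hidden-state measure on `ℂ`: a Borel probability measure without
atoms which is invariant under every rotation `z ↦ e^{iθ}·z`. -/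
def IsEta (η : Measure ℂ) : Prop :=
  IsProbabilityMeasure η ∧ NoAtoms η ∧
    ∀ θ : ℝ, Measure.map (fun z : ℂ => Complex.exp (θ * Complex.I) * z) η = η

/-- A subset `A ⊆ H` is pseudo-Borel if its intersection with every complex line is Borel;
equivalently, its preimage under `z ↦ z • ψ` is Borel in `ℂ` for every unit vector `ψ`. -/
def PseudoBorel (A : Set H) : Prop :=
  ∀ ψ : H, ‖ψ‖ = 1 → MeasurableSet ((fun z : ℂ => z • ψ) ⁻¹' A)

/-- A function `f : H → ℝ` is pseudo-Borel if `f ⁻¹' B` is pseudo-Borel for every Borel `B`. -/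
def PseudoBorelFun (f : H → ℝ) : Prop :=
  ∀ B : Set ℝ, MeasurableSet B → PseudoBorel (f ⁻¹' B)

/-- The pseudo-Borel σ-algebra on `H`. -/
def pseudoBorelSigma (H : Type*) [NormedAddCommGroup H] [InnerProductSpace ℂ H] :
    MeasurableSpace H where
  MeasurableSet' := PseudoBorel
  measurableSet_empty := fun ψ _ => by simp
  measurableSet_compl := fun A hA ψ hψ => by
    rw [Set.preimage_compl]; exact (hA ψ hψ).compl
  measurableSet_iUnion := fun s hs ψ hψ => by
    rw [Set.preimage_iUnion]; exact MeasurableSet.iUnion fun i => hs i ψ hψ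

/-- The mass that the canonical measure on the complex line through the unit vector `ψ`
gives to (the trace on that line of) the set `A`. -/
def lineMass (η : Measure ℂ) (ψ : H) (A : Set H) : ENNReal :=
  η ((fun z : ℂ => z • ψ) ⁻¹' A)

/-- A measure-zero pseudo-Borel subset of `H` : it meets every complex line in a null set. -/
def NullPB (η : Measure ℂ) (A : Set H) : Prop :=
  PseudoBorel A ∧ ∀ ψ : H, ‖ψ‖ = 1 → lineMass η ψ A = 0

/-- `f` is essentially bounded: bounded outside a measure-zero pseudo-Borel set. -/
def EssBddPB (η : Measure ℂ) (f : H → ℝ) : Prop :=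
  ∃ N : Set H, NullPB η N ∧ ∃ C : ℝ, ∀ x ∉ N, |f x| ≤ C

/-- The expectation value `⟨T⟩_ψ = ⟨Tψ, ψ⟩` of a (self-adjoint) operator at `ψ`. -/
def expVal (T : H →L[ℂ] H) (ψ : H) : ℝ :=
  (@inner ℂ _ _ ψ (T ψ)).re

/-- The integral `∫_{ℂ·ψ} f dη_{ℂ·ψ}` of `f` over the complex line through the unit
vector `ψ`, with respect to the canonical copy of `η` on that line. -/
def lineIntegral (η : Measure ℂ) (f : H → ℝ) (ψ : H) : ℝ :=
  ∫ z : ℂ, f (z • ψ) ∂η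

/-- `f` is an essentially bounded pseudo-Borel function with orthodox mean values, with
(necessarily unique) associated bounded self-adjoint operator `T = σ(f)`. -/
def OrthodoxMean (η : Measure ℂ) (f : H → ℝ) (T : H →L[ℂ] H) : Prop :=
  PseudoBorelFun f ∧ EssBddPB η f ∧ IsSelfAdjoint T ∧
    ∀ ψ : H, ‖ψ‖ = 1 → lineIntegral η f ψ = expVal T ψ

/-- `b ∈ 𝓑` : Borel functions `ℝ → ℝ` mapping bounded sets to bounded sets. -/
def MemB (b : ℝ → ℝ) : Prop :=
  Measurable b ∧ ∀ s : Set ℝ, Bornology.IsBounded s → Bornology.IsBounded (b '' s)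

/-- `ν` is the spectral (scalar) measure of the bounded self-adjoint operator `T` at the
unit vector `ψ`: the unique probability measure supported in `[-‖T‖, ‖T‖]` whose moments
are the expectation values `⟨Tⁿ⟩_ψ`. -/
def IsSpecMeasure (T : H →L[ℂ] H) (ψ : H) (ν : Measure ℝ) : Prop :=
  IsProbabilityMeasure ν ∧ ν (Set.Icc (-‖T‖) ‖T‖)ᶜ = 0 ∧
    ∀ n : ℕ, ∫ r, r ^ n ∂ν = expVal (T ^ n) ψ

/-- `S = b(T)` : the Borel functional calculus of the bounded self-adjoint operator `T` at
the Borel function `b`, characterized by `⟨b(T)⟩_ψ = ∫ b dν_ψ` against the spectral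
measures `ν_ψ` of `T`. -/
def IsBFC (b : ℝ → ℝ) (T S : H →L[ℂ] H) : Prop :=
  IsSelfAdjoint S ∧ ∀ ψ : H, ‖ψ‖ = 1 → ∀ ν : Measure ℝ, IsSpecMeasure T ψ ν →
    ∫ r, b r ∂ν = expVal S ψ

/-- `f` is a hidden observable with `σ(f) = T`: `f` has orthodox mean values with operator
`T` and for every `b ∈ 𝓑` the composition `b ∘ f` has orthodox mean values with operator
`b(σ(f))`. -/
def HiddenObs (η : Measure ℂ) (f : H → ℝ) (T : H →L[ℂ] H) : Prop :=
  OrthodoxMean η f T ∧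
    ∀ b : ℝ → ℝ, MemB b → ∃ S : H →L[ℂ] H, IsBFC b T S ∧ OrthodoxMean η (b ∘ f) S

/-- `f` is a hidden observable (member of `𝓞`). -/
def IsHiddenObs (η : Measure ℂ) (f : H → ℝ) : Prop :=
  ∃ T : H →L[ℂ] H, HiddenObs η f T

/-- The characteristic function `χ_L` of a subset of `H`. -/
def chi (L : Set H) : H → ℝ :=
  Set.indicator L fun _ => (1 : ℝ)

/-- `L` is a hidden proposition with `σ(χ_L) = E`. -/
def HiddenProp (η : Measure ℂ) (L : Set H) (E : H →L[ℂ] H) : Prop :=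
  HiddenObs η (chi L) E

/-- `L` is a hidden proposition. -/
def IsHiddenProp (η : Measure ℂ) (L : Set H) : Prop :=
  ∃ E : H →L[ℂ] H, HiddenProp η L E

/-- `E` is an orthogonal projection of `H`. -/
def IsProjection (E : H →L[ℂ] H) : Prop :=
  IsSelfAdjoint E ∧ E * E = E

/-- The orthogonal projection onto the complex line `ℂ·ψ` spanned by a unit vector. -/
def projLine (ψ : H) : H →L[ℂ] H :=
  (innerSL ℂ ψ).smulRight ψ

/-- `HasTrace S t` : the operator `S` is trace class with trace `t`; the series
`Σ ⟪e_k, S e_k⟫` converges to `t` for every Hilbert basis. -/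
def HasTrace (S : H →L[ℂ] H) (t : ℂ) : Prop :=
  ∀ b : HilbertBasis ℕ ℂ H, HasSum (fun k => (@inner ℂ _ _ (b k) (S (b k)))) t

/-- `D` is a density matrix: a positive trace-class operator of trace one, i.e.
`D = Σ w_k·P_{ψ_k}` for some Hilbert basis `{ψ_k}` and weights `w_k ≥ 0` with `Σ w_k = 1`. -/
def IsDensityMatrix (D : H →L[ℂ] H) : Prop :=
  ∃ (b : HilbertBasis ℕ ℂ H) (w : ℕ → ℝ), (∀ k, 0 ≤ w k) ∧ HasSum w 1 ∧
    HasSum (fun k => (w k : ℂ) • projLine (b k)) D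

/-- A hidden mixed state: a probability measure on the pseudo-Borel σ-algebra of `H`
giving the same mass to hidden propositions having the same trace-measure on every
complex line. -/
def HiddenMixed (η : Measure ℂ) (μ : @Measure H (pseudoBorelSigma H)) : Prop :=
  IsProbabilityMeasure μ ∧
    ∀ L M : Set H, IsHiddenProp η L → IsHiddenProp η M →
      (∀ ψ : H, ‖ψ‖ = 1 → lineMass η ψ L = lineMass η ψ M) → μ L = μ M

/-- `D = δ(μ)` : `D` is the density matrix associated to the hidden mixed state `μ`,
characterized by `μ(L) = Trace[σ(χ_L)·D]` for every hidden proposition `L`. -/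
def IsDelta (η : Measure ℂ) (μ : @Measure H (pseudoBorelSigma H)) (D : H →L[ℂ] H) : Prop :=
  IsDensityMatrix D ∧
    ∀ (L : Set H) (E : H →L[ℂ] H), HiddenProp η L E →
      HasTrace (E ∘L D) (((μ L).toReal : ℂ))

variable [TopologicalSpace.SeparableSpace H]


/-! ### expectation value lemmas -/

lemma expVal_nonneg {S : H →L[ℂ] H} (h : 0 ≤ S) (ψ : H) : 0 ≤ expVal S ψ := by
  rw [ContinuousLinearMap.nonneg_iff_isPositive] at h
  exact h.re_inner_nonneg_right ψ

lemma expVal_abs_le (S : H →L[ℂ] H) {ψ : H} (hψ : ‖ψ‖ = 1) : |expVal S ψ| ≤ ‖S‖ := by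
  have h1 : |expVal S ψ| ≤ ‖(@inner ℂ _ _ ψ (S ψ))‖ := by
    simpa [expVal] using Complex.abs_re_le_norm (@inner ℂ _ _ ψ (S ψ))
  refine h1.trans ?_
  calc ‖(@inner ℂ _ _ ψ (S ψ))‖ ≤ ‖ψ‖ * ‖S ψ‖ := norm_inner_le_norm _ _
  _ ≤ ‖ψ‖ * (‖S‖ * ‖ψ‖) := by gcongr; exact S.le_opNorm ψ
  _ = ‖S‖ := by rw [hψ]; ring

lemma expVal_sub (S₁ S₂ : H →L[ℂ] H) (ψ : H) :
    expVal (S₁ - S₂) ψ = expVal S₁ ψ - expVal S₂ ψ := by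
  simp [expVal, inner_sub_right]

lemma expVal_smul (c : ℝ) (S : H →L[ℂ] H) (ψ : H) :
    expVal (c • S) ψ = c * expVal S ψ := by
  rw [expVal, expVal, ContinuousLinearMap.smul_apply,
    RCLike.real_smul_eq_coe_smul (K := ℂ), inner_smul_right]
  simp [Complex.mul_re]

lemma expVal_sum {ι : Type*} (s : Finset ι) (S : ι → H →L[ℂ] H) (ψ : H) :
    expVal (∑ i ∈ s, S i) ψ = ∑ i ∈ s, expVal (S i) ψ := by
  classical
  induction s using Finset.induction_on with
  | empty => simp [expVal]
  | insert _ _ h ih =>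
      rw [Finset.sum_insert h, Finset.sum_insert h, ← ih]
      simp [expVal, inner_add_right]

lemma expVal_one {ψ : H} (hψ : ‖ψ‖ = 1) : expVal (1 : H →L[ℂ] H) ψ = 1 := by
  simp [expVal, inner_self_eq_norm_sq_to_K, hψ]

lemma expVal_zero (ψ : H) : expVal (0 : H →L[ℂ] H) ψ = 0 := by
  simp [expVal]

/-! ### hat functions -/

/-- A continuous approximation of the indicator of `Iic t`: equal to `1` on `Iic t`,
`0` outside `Iic (t+δ)`, linear in between. -/
def hat (t δ r : ℝ) : ℝ := max 0 (min 1 ((t + δ - r) / δ))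

lemma hat_nonneg (t δ r : ℝ) : 0 ≤ hat t δ r := le_max_left _ _

lemma hat_le_one (t δ r : ℝ) : hat t δ r ≤ 1 :=
  max_le zero_le_one (min_le_left _ _)

lemma hat_eq_one {t δ r : ℝ} (hδ : 0 < δ) (h : r ≤ t) : hat t δ r = 1 := by
  have h1 : (1 : ℝ) ≤ (t + δ - r) / δ := by
    rw [le_div_iff₀ hδ]; linarith
  rw [hat, min_eq_left h1, max_eq_right zero_le_one]

lemma hat_eq_zero {t δ r : ℝ} (hδ : 0 < δ) (h : t + δ ≤ r) : hat t δ r = 0 := by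
  have h1 : (t + δ - r) / δ ≤ 0 := div_nonpos_of_nonpos_of_nonneg (by linarith) hδ.le
  exact max_eq_left ((min_le_right _ _).trans h1)

lemma hat_mono_t {t t' : ℝ} (δ : ℝ) (hδ : 0 < δ) (h : t ≤ t') (r : ℝ) :
    hat t δ r ≤ hat t' δ r := by
  unfold hat; gcongr

lemma hat_mono_delta {δ δ' : ℝ} (t : ℝ) (hδ : 0 < δ) (h : δ ≤ δ') (r : ℝ) :
    hat t δ r ≤ hat t δ' r := by
  have hδ' : 0 < δ' := hδ.trans_le h
  rcases le_or_gt r t with hr | hr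
  · rw [hat_eq_one hδ' hr]; exact hat_le_one _ _ _
  · have key : (t + δ - r) / δ ≤ (t + δ' - r) / δ' := by
      have e1 : (t + δ - r) / δ = 1 - (r - t) / δ := by
        field_simp; ring
      have e2 : (t + δ' - r) / δ' = 1 - (r - t) / δ' := by
        field_simp; ring
      rw [e1, e2]
      have : (r - t) / δ' ≤ (r - t) / δ :=
        div_le_div_of_nonneg_left (by linarith) hδ h
      linarith
    unfold hat; gcongr

lemma hat_le_of_le {t δ t' δ' : ℝ} (hδ : 0 < δ) (hδ' : 0 < δ') (h : t + δ ≤ t') (r : ℝ) :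
    hat t δ r ≤ hat t' δ' r := by
  rcases le_or_gt r t' with hr | hr
  · rw [hat_eq_one hδ' hr]; exact hat_le_one _ _ _
  · rw [hat_eq_zero hδ (by linarith)]; exact hat_nonneg _ _ _

lemma abs_hat_sub_hat {δ : ℝ} (hδ : 0 < δ) (t t' r : ℝ) :
    |hat t' δ r - hat t δ r| ≤ |t' - t| / δ := by
  have clamp : ∀ a b : ℝ, |max 0 (min 1 a) - max 0 (min 1 b)| ≤ |a - b| := by
    intro a b
    calc |max 0 (min 1 a) - max 0 (min 1 b)|
        = |max (min 1 a) 0 - max (min 1 b) 0| := by rw [max_comm, max_comm (min 1 b)]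
      _ ≤ |min 1 a - min 1 b| := abs_max_sub_max_le_abs _ _ _
      _ ≤ max |(1:ℝ) - 1| |a - b| := abs_min_sub_min_le_max _ _ _ _
      _ ≤ |a - b| := by simp
  have := clamp ((t' + δ - r) / δ) ((t + δ - r) / δ)
  rw [div_sub_div_same] at this
  have e : t' + δ - r - (t + δ - r) = t' - t := by ring
  rw [e, abs_div, abs_of_pos hδ] at this
  exact this

lemma continuous_hat (t δ : ℝ) : Continuous (hat t δ) :=
  continuous_const.max (continuous_const.min ((continuous_const.sub continuous_id).div_const δ))

/-! ### the functional φ -/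

/-- The positive functional `g ↦ ⟨cfc g T ψ, ψ⟩`. -/
def phi (T : H →L[ℂ] H) (ψ : H) (g : ℝ → ℝ) : ℝ := expVal (cfc g T) ψ

variable {T : H →L[ℂ] H} {ψ : H}

lemma phi_nonneg {g : ℝ → ℝ} (hg : ∀ r ∈ spectrum ℝ T, 0 ≤ g r) : 0 ≤ phi T ψ g :=
  expVal_nonneg (cfc_nonneg hg) ψ

lemma phi_abs_le [Nontrivial H] {g : ℝ → ℝ} {c : ℝ} (hψ : ‖ψ‖ = 1) (hc : 0 ≤ c)
    (hg : ∀ r ∈ spectrum ℝ T, |g r| ≤ c) : |phi T ψ g| ≤ c :=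
  (expVal_abs_le _ hψ).trans (norm_cfc_le hc (by simpa [Real.norm_eq_abs] using hg))

lemma phi_sub (hT : IsSelfAdjoint T) (g₁ g₂ : ℝ → ℝ) (h₁ : Continuous g₁) (h₂ : Continuous g₂) :
    phi T ψ (fun r => g₁ r - g₂ r) = phi T ψ g₁ - phi T ψ g₂ := by
  have : cfc (fun r => g₁ r - g₂ r) T = cfc g₁ T - cfc g₂ T :=
    cfc_sub g₁ g₂ T h₁.continuousOn h₂.continuousOn
  rw [phi, this, expVal_sub]; rfl

lemma phi_mono (hT : IsSelfAdjoint T) {g₁ g₂ : ℝ → ℝ} (h₁ : Continuous g₁) (h₂ : Continuous g₂)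
    (h : ∀ r ∈ spectrum ℝ T, g₁ r ≤ g₂ r) : phi T ψ g₁ ≤ phi T ψ g₂ := by
  have h0 : 0 ≤ phi T ψ (fun r => g₂ r - g₁ r) :=
    phi_nonneg (fun r hr => sub_nonneg.2 (h r hr))
  rw [phi_sub hT g₂ g₁ h₂ h₁] at h0
  linarith

lemma phi_congr {g₁ g₂ : ℝ → ℝ} (h : Set.EqOn g₁ g₂ (spectrum ℝ T)) :
    phi T ψ g₁ = phi T ψ g₂ := by
  rw [phi, cfc_congr h]; rfl

lemma phi_one (hT : IsSelfAdjoint T) (hψ : ‖ψ‖ = 1) {g : ℝ → ℝ}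
    (h : ∀ r ∈ spectrum ℝ T, g r = 1) : phi T ψ g = 1 := by
  rw [phi_congr (g₂ := fun _ => 1) h, phi, cfc_const 1 T, map_one, expVal_one hψ]

lemma phi_zero' (hT : IsSelfAdjoint T) {g : ℝ → ℝ}
    (h : ∀ r ∈ spectrum ℝ T, g r = 0) : phi T ψ g = 0 := by
  rw [phi_congr (g₂ := fun _ => 0) h, phi]
  have : cfc (fun _ : ℝ => (0:ℝ)) T = 0 := by
    simpa using cfc_zero ℝ (a := T)
  rw [this, expVal_zero]

lemma phi_const_mul (hT : IsSelfAdjoint T) (c : ℝ) (g : ℝ → ℝ) (hg : Continuous g) :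
    phi T ψ (fun r => c * g r) = c * phi T ψ g := by
  rw [phi, cfc_const_mul c g T hg.continuousOn, expVal_smul]; rfl

lemma phi_sum {ι : Type*} (hT : IsSelfAdjoint T) (s : Finset ι) (u : ι → ℝ → ℝ)
    (hu : ∀ i ∈ s, Continuous (u i)) :
    phi T ψ (fun r => ∑ i ∈ s, u i r) = ∑ i ∈ s, phi T ψ (u i) := by
  have : cfc (fun r => ∑ i ∈ s, u i r) T = ∑ i ∈ s, cfc (u i) T := by
    have := cfc_sum u T s (fun i hi => (hu i hi).continuousOn)
    rw [← this]
    congr 1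
    ext r
    simp
  rw [phi, this, expVal_sum]
  rfl


/-! ### the CDF and its Stieltjes measure -/

section CDF

variable [Nontrivial H] {T : H →L[ℂ] H} {ψ : H}

lemma spec_abs_le {r : ℝ} (hr : r ∈ spectrum ℝ T) : |r| ≤ ‖T‖ := by
  have := spectrum.norm_le_norm_of_mem hr
  rwa [Real.norm_eq_abs] at this

/-- Candidate CDF for the spectral measure of `T` at `ψ`. -/
def FF (T : H →L[ℂ] H) (ψ : H) : ℝ → ℝ :=
  fun t => ⨅ n : ℕ, phi T ψ (hat t (1 / (n + 1 : ℝ)))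

lemma npos (n : ℕ) : (0:ℝ) < 1/(n+1:ℝ) := by positivity

lemma FF_bddBelow (t : ℝ) :
    BddBelow (Set.range fun n : ℕ => phi T ψ (hat t (1/(n+1:ℝ)))) :=
  ⟨0, by rintro x ⟨n, rfl⟩; exact phi_nonneg (fun r _ => hat_nonneg _ _ _)⟩

lemma FF_nonneg (t : ℝ) : 0 ≤ FF T ψ t :=
  le_ciInf fun _ => phi_nonneg (fun r _ => hat_nonneg _ _ _)

lemma FF_le_phi_hat (hT : IsSelfAdjoint T) {δ : ℝ} (hδ : 0 < δ) (t : ℝ) :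
    FF T ψ t ≤ phi T ψ (hat t δ) := by
  obtain ⟨n, hn⟩ := exists_nat_one_div_lt hδ
  exact (ciInf_le (FF_bddBelow t) n).trans
    (phi_mono hT (continuous_hat _ _) (continuous_hat _ _)
      (fun r _ => hat_mono_delta _ (npos n) hn.le r))

lemma phi_hat_le_FF (hT : IsSelfAdjoint T) {δ t t' : ℝ} (hδ : 0 < δ) (h : t + δ ≤ t') :
    phi T ψ (hat t δ) ≤ FF T ψ t' :=
  le_ciInf fun n => phi_mono hT (continuous_hat _ _) (continuous_hat _ _)
    (fun r _ => hat_le_of_le hδ (npos n) h r)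

lemma FF_mono (hT : IsSelfAdjoint T) : Monotone (FF T ψ) := by
  intro t t' h
  exact le_ciInf fun n => (ciInf_le (FF_bddBelow t) n).trans
    (phi_mono hT (continuous_hat _ _) (continuous_hat _ _)
      (fun r _ => hat_mono_t _ (npos n) h r))

lemma FF_le_one (hψ : ‖ψ‖ = 1) (t : ℝ) : FF T ψ t ≤ 1 := by
  refine (ciInf_le (FF_bddBelow t) 0).trans ?_
  have h := phi_abs_le (T := T) (g := hat t (1/((0:ℕ)+1:ℝ))) hψ zero_le_one
    (fun r _ => by rw [abs_of_nonneg (hat_nonneg _ _ _)]; exact hat_le_one _ _ _)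
  exact (abs_le.mp h).2

lemma FF_eq_zero (hT : IsSelfAdjoint T) {t : ℝ} (h : t < -‖T‖) : FF T ψ t = 0 := by
  obtain ⟨n, hn⟩ := exists_nat_one_div_lt (show (0:ℝ) < -‖T‖ - t by linarith)
  have h0 : phi T ψ (hat t (1/(n+1:ℝ))) = 0 := by
    refine phi_zero' hT (fun r hr => hat_eq_zero (npos n) ?_)
    have := (abs_le.mp (spec_abs_le hr)).1
    linarith
  exact le_antisymm ((ciInf_le (FF_bddBelow t) n).trans_eq h0) (FF_nonneg t)

lemma FF_eq_one (hT : IsSelfAdjoint T) (hψ : ‖ψ‖ = 1) {t : ℝ} (h : ‖T‖ ≤ t) :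
    FF T ψ t = 1 := by
  have h1 : ∀ n : ℕ, phi T ψ (hat t (1/(n+1:ℝ))) = 1 := fun n => by
    refine phi_one hT hψ (fun r hr => hat_eq_one (npos n) ?_)
    have := (abs_le.mp (spec_abs_le hr)).2
    linarith
  rw [FF]
  simp only [h1, ciInf_const]

lemma FF_right_le (hT : IsSelfAdjoint T) (hψ : ‖ψ‖ = 1) {t ε : ℝ} (hε : 0 < ε) :
    ∃ η > 0, ∀ s, t ≤ s → s ≤ t + η → FF T ψ s ≤ FF T ψ t + ε := by
  have h2 : FF T ψ t < FF T ψ t + ε/2 := by linarith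
  obtain ⟨m, hm⟩ := exists_lt_of_ciInf_lt h2
  set δ := 1/(m+1:ℝ) with hδdef
  have hδ : 0 < δ := npos m
  refine ⟨ε/2*δ, by positivity, fun s hs hs' => ?_⟩
  have hsub := phi_sub (ψ := ψ) hT (hat s δ) (hat t δ) (continuous_hat _ _) (continuous_hat _ _)
  have hstnn : (0:ℝ) ≤ s - t := by linarith
  have hb : |phi T ψ (fun r => hat s δ r - hat t δ r)| ≤ (s - t)/δ :=
    phi_abs_le hψ (div_nonneg hstnn hδ.le)
      (fun r _ => (abs_hat_sub_hat hδ t s r).trans_eq (by rw [abs_of_nonneg hstnn]))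
  rw [hsub] at hb
  have h5 := (abs_le.mp hb).2
  have h3 : FF T ψ s ≤ phi T ψ (hat s δ) := FF_le_phi_hat hT hδ s
  have h4 : (s - t)/δ ≤ ε/2 := by
    rw [div_le_iff₀ hδ]
    nlinarith
  linarith

/-- The CDF as a Stieltjes function. -/
def FSt (T : H →L[ℂ] H) (ψ : H) [Nontrivial H] (hT : IsSelfAdjoint T) (hψ : ‖ψ‖ = 1) :
    StieltjesFunction ℝ where
  toFun := FF T ψ
  mono' := FF_mono hT
  right_continuous' := by
    intro t
    rw [Metric.continuousWithinAt_iff]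
    intro ε hε
    obtain ⟨η, hη, hkey⟩ := FF_right_le hT hψ (t := t) (half_pos hε)
    refine ⟨η, hη, fun s hs hd => ?_⟩
    have hts : t ≤ s := hs
    rw [Real.dist_eq, abs_of_nonneg (by linarith : (0:ℝ) ≤ s - t)] at hd
    have h1 : FF T ψ t ≤ FF T ψ s := FF_mono hT hts
    have h2 : FF T ψ s ≤ FF T ψ t + ε/2 := hkey s hts (by linarith)
    rw [Real.dist_eq, abs_of_nonneg (by linarith)]
    linarith

lemma FSt_apply (hT : IsSelfAdjoint T) (hψ : ‖ψ‖ = 1) (t : ℝ) :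
    FSt T ψ hT hψ t = FF T ψ t := rfl

lemma FSt_tendsto_atBot (hT : IsSelfAdjoint T) (hψ : ‖ψ‖ = 1) :
    Filter.Tendsto (FSt T ψ hT hψ) Filter.atBot (nhds 0) := by
  have he : (fun _ : ℝ => (0:ℝ)) =ᶠ[Filter.atBot] (FSt T ψ hT hψ) := by
    filter_upwards [Filter.eventually_le_atBot (-‖T‖-1)] with t ht
    exact (FF_eq_zero hT (by linarith)).symm
  exact Filter.Tendsto.congr' he tendsto_const_nhds

lemma FSt_tendsto_atTop (hT : IsSelfAdjoint T) (hψ : ‖ψ‖ = 1) :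
    Filter.Tendsto (FSt T ψ hT hψ) Filter.atTop (nhds 1) := by
  have he : (fun _ : ℝ => (1:ℝ)) =ᶠ[Filter.atTop] (FSt T ψ hT hψ) := by
    filter_upwards [Filter.eventually_ge_atTop ‖T‖] with t ht
    exact (FF_eq_one hT hψ ht).symm
  exact Filter.Tendsto.congr' he tendsto_const_nhds

lemma FSt_prob (hT : IsSelfAdjoint T) (hψ : ‖ψ‖ = 1) :
    IsProbabilityMeasure (FSt T ψ hT hψ).measure :=
  (FSt T ψ hT hψ).isProbabilityMeasure (FSt_tendsto_atBot hT hψ) (FSt_tendsto_atTop hT hψ)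

lemma FSt_measure_Iic (hT : IsSelfAdjoint T) (hψ : ‖ψ‖ = 1) (t : ℝ) :
    (FSt T ψ hT hψ).measure (Set.Iic t) = ENNReal.ofReal (FF T ψ t) := by
  rw [StieltjesFunction.measure_Iic _ (FSt_tendsto_atBot hT hψ), sub_zero]
  rfl

lemma FSt_compl_null (hT : IsSelfAdjoint T) (hψ : ‖ψ‖ = 1) :
    (FSt T ψ hT hψ).measure (Set.Icc (-‖T‖) ‖T‖)ᶜ = 0 := by
  have hcompl : (Set.Icc (-‖T‖) ‖T‖)ᶜ = Set.Iio (-‖T‖) ∪ Set.Ioi ‖T‖ := by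
    ext r
    simp only [Set.mem_compl_iff, Set.mem_Icc, not_and_or, not_le, Set.mem_union,
      Set.mem_Iio, Set.mem_Ioi]
  rw [hcompl]
  refine measure_union_null ?_ ?_
  · have hsub : Set.Iio (-‖T‖) ⊆ ⋃ n : ℕ, Set.Iic (-‖T‖ - ((n:ℝ)+1)⁻¹) := by
      intro r hr
      have hr' : r < -‖T‖ := hr
      obtain ⟨n, hn⟩ := exists_nat_one_div_lt (show (0:ℝ) < -‖T‖ - r by linarith)
      rw [one_div] at hn
      exact Set.mem_iUnion.2 ⟨n, by simp only [Set.mem_Iic]; linarith⟩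
    refine measure_mono_null hsub ?_
    refine le_antisymm ((measure_iUnion_le _).trans ?_) (zero_le)
    have h0 : ∀ n : ℕ, (FSt T ψ hT hψ).measure (Set.Iic (-‖T‖ - ((n:ℝ)+1)⁻¹)) = 0 := fun n => by
      have hn := npos n
      rw [one_div] at hn
      rw [FSt_measure_Iic hT hψ, FF_eq_zero hT (by linarith)]
      simp
    simp [h0]
  · haveI := FSt_prob hT hψ
    have : Set.Ioi ‖T‖ = (Set.Iic ‖T‖)ᶜ := (Set.compl_Iic).symm
    rw [this, measure_compl measurableSet_Iic (measure_ne_top _ _), measure_univ,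
      FSt_measure_Iic hT hψ, FF_eq_one hT hψ le_rfl, ENNReal.ofReal_one, tsub_self]

end CDF

/-! ### the representation theorem -/

section Rep

variable [Nontrivial H] {T : H →L[ℂ] H} {ψ : H}

lemma integrable_of_bdd {ν : Measure ℝ} [IsFiniteMeasure ν] {g : ℝ → ℝ} {c : ℝ}
    (hm : AEStronglyMeasurable g ν) (h : ∀ r, |g r| ≤ c) : Integrable g ν :=
  (integrable_const c).mono' hm (Filter.Eventually.of_forall (by
    intro r; rw [Real.norm_eq_abs]; exact h r))

lemma integrable_hat {ν : Measure ℝ} [IsFiniteMeasure ν] (t δ : ℝ) : Integrable (hat t δ) ν :=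
  integrable_of_bdd (c := 1) (continuous_hat t δ).aestronglyMeasurable
    (fun r => by rw [abs_of_nonneg (hat_nonneg _ _ _)]; exact hat_le_one _ _ _)

lemma integral_hat_ge (hT : IsSelfAdjoint T) (hψ : ‖ψ‖ = 1) {δ : ℝ} (hδ : 0 < δ) (t : ℝ) :
    FF T ψ t ≤ ∫ r, hat t δ r ∂(FSt T ψ hT hψ).measure := by
  haveI := FSt_prob hT hψ
  have hind : ∫ r, (Set.Iic t).indicator (fun _ => (1:ℝ)) r ∂(FSt T ψ hT hψ).measure
      = FF T ψ t := by
    rw [integral_indicator_const (1:ℝ) measurableSet_Iic, measureReal_def, FSt_measure_Iic hT hψ,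
      smul_eq_mul, mul_one, ENNReal.toReal_ofReal (FF_nonneg t)]
  rw [← hind]
  refine integral_mono ((integrable_const (1:ℝ)).indicator measurableSet_Iic)
    (integrable_hat t δ) ?_
  intro r
  by_cases hr : r ∈ Set.Iic t
  · rw [Set.indicator_of_mem hr]; exact (hat_eq_one hδ hr).ge
  · rw [Set.indicator_of_notMem hr]; exact hat_nonneg _ _ _

lemma integral_hat_le (hT : IsSelfAdjoint T) (hψ : ‖ψ‖ = 1) {δ : ℝ} (hδ : 0 < δ) (t : ℝ) :
    ∫ r, hat t δ r ∂(FSt T ψ hT hψ).measure ≤ FF T ψ (t + δ) := by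
  haveI := FSt_prob hT hψ
  have hind : ∫ r, (Set.Iic (t+δ)).indicator (fun _ => (1:ℝ)) r ∂(FSt T ψ hT hψ).measure
      = FF T ψ (t+δ) := by
    rw [integral_indicator_const (1:ℝ) measurableSet_Iic, measureReal_def, FSt_measure_Iic hT hψ,
      smul_eq_mul, mul_one, ENNReal.toReal_ofReal (FF_nonneg _)]
  rw [← hind]
  refine integral_mono (integrable_hat t δ)
    ((integrable_const (1:ℝ)).indicator measurableSet_Iic) ?_
  intro r
  by_cases hr : r ∈ Set.Iic (t+δ)
  · rw [Set.indicator_of_mem hr]; exact hat_le_one _ _ _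
  · rw [Set.indicator_of_notMem hr]
    rw [Set.mem_Iic, not_le] at hr
    exact (hat_eq_zero hδ hr.le).le

lemma integral_FSt (hT : IsSelfAdjoint T) (hψ : ‖ψ‖ = 1) (g : ℝ → ℝ) (hg : Continuous g)
    {c : ℝ} (hc : ∀ r, |g r| ≤ c) :
    ∫ r, g r ∂(FSt T ψ hT hψ).measure = phi T ψ g := by
  haveI := FSt_prob hT hψ
  have key : ∀ ε : ℝ, 0 < ε →
      |(∫ r, g r ∂(FSt T ψ hT hψ).measure) - phi T ψ g| ≤ ε := by
    intro ε hε
    have hM0 : (0:ℝ) ≤ ‖T‖ := norm_nonneg T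
    -- uniform continuity on J = Icc (-‖T‖-2) (‖T‖+2)
    have huc : UniformContinuousOn g (Set.Icc (-‖T‖-2) (‖T‖+2)) :=
      (isCompact_Icc).uniformContinuousOn_of_continuous hg.continuousOn
    rw [Metric.uniformContinuousOn_iff] at huc
    obtain ⟨δ₀, hδ₀, hucg⟩ := huc (ε/4) (by positivity)
    -- mesh
    have hm0 : 0 < min δ₀ 1 := lt_min hδ₀ one_pos
    set N : ℕ := ⌈(2*‖T‖+3) * 2 / min δ₀ 1⌉₊ + 1 with hN
    have hNR : (0:ℝ) < (N:ℕ) := by positivity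
    set δ : ℝ := (2*‖T‖+3)/N with hδdef
    have hδpos : 0 < δ := by positivity
    have hδm : δ ≤ min δ₀ 1 / 2 := by
      rw [hδdef, div_le_iff₀ hNR]
      have h1 : (2*‖T‖+3) * 2 / min δ₀ 1 ≤ (N:ℝ) := by
        rw [hN]; push_cast
        exact (Nat.le_ceil _).trans (by linarith)
      have e : (2*‖T‖+3) * 2 / min δ₀ 1 * (min δ₀ 1 / 2) = 2*‖T‖+3 := by
        field_simp
      nlinarith [mul_le_mul_of_nonneg_right h1 (half_pos hm0).le]
    have hδ1 : δ ≤ 1 := hδm.trans (by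
      have := min_le_right δ₀ 1; linarith)
    have hδδ₀ : δ < δ₀ := hδm.trans_lt (by
      have := min_le_left δ₀ 1; linarith)
    -- grid
    set t : ℕ → ℝ := fun i => (-‖T‖-2) + i * δ with ht
    have htsucc : ∀ i : ℕ, t (i+1) = t i + δ := by
      intro i; rw [ht]; push_cast; ring
    have htN : t N = ‖T‖ + 1 := by
      have hmul : (N:ℝ) * ((2*‖T‖+3)/N) = 2*‖T‖+3 := mul_div_cancel₀ _ (ne_of_gt hNR)
      rw [ht, hδdef]
      dsimp only
      rw [hmul]; ring
    have htmono : ∀ i j : ℕ, i ≤ j → t i ≤ t j := by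
      intro i j h
      rw [ht]; dsimp only
      have h1 : (i:ℝ) ≤ j := Nat.cast_le.2 h
      nlinarith
    have htJ : ∀ i : ℕ, i ≤ N + 1 → t i ∈ Set.Icc (-‖T‖-2) (‖T‖+2) := by
      intro i hi
      constructor
      · rw [ht]; dsimp only
        have : (0:ℝ) ≤ (i:ℝ) * δ := by positivity
        linarith
      · have h1 := htmono i (N+1) hi
        have h2 : t (N+1) = ‖T‖ + 1 + δ := by rw [htsucc, htN]
        linarith [h1.trans_eq h2]
    -- P, Q, d
    set P : ℕ → ℝ := fun i => phi T ψ (hat (t i) δ) with hP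
    set Q : ℕ → ℝ := fun i => ∫ r, hat (t i) δ r ∂(FSt T ψ hT hψ).measure with hQ
    set d : ℕ → ℝ := fun i => Q i - P i with hd
    have hPl : ∀ i, FF T ψ (t i) ≤ P i := fun i => FF_le_phi_hat hT hδpos (t i)
    have hPu : ∀ i, P i ≤ FF T ψ (t (i+1)) := fun i => by
      rw [htsucc]; exact phi_hat_le_FF hT hδpos le_rfl
    have hQl : ∀ i, FF T ψ (t i) ≤ Q i := fun i => integral_hat_ge hT hψ hδpos (t i)
    have hQu : ∀ i, Q i ≤ FF T ψ (t (i+1)) := fun i => by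
      rw [htsucc]; exact integral_hat_le hT hψ hδpos (t i)
    have hdabs : ∀ i, |d i| ≤ FF T ψ (t (i+1)) - FF T ψ (t i) := fun i =>
      abs_le.2 ⟨by have := hPu i; have := hQl i; rw [hd]; dsimp only; linarith,
        by have := hPl i; have := hQu i; rw [hd]; dsimp only; linarith⟩
    have ht1 : t 1 < -‖T‖ := by
      rw [htsucc 0]
      have ht0 : t 0 = -‖T‖-2 := by rw [ht]; simp
      rw [ht0]; linarith
    have hFF1 : FF T ψ (t 1) = 0 := FF_eq_zero hT ht1
    have hd0 : d 0 = 0 := by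
      have h1 := hQl 0
      have h2 := hQu 0
      have h3 := hPl 0
      have h4 := hPu 0
      have h5 := FF_nonneg (T := T) (ψ := ψ) (t 0)
      rw [hd]; dsimp only
      rw [hFF1] at h2 h4
      linarith
    have hFFN : FF T ψ (t N) = 1 := by rw [htN]; exact FF_eq_one hT hψ (by linarith)
    have hdN : d N = 0 := by
      have hPuN : P N ≤ 1 := by
        have h := phi_abs_le (T := T) (g := hat (t N) δ) hψ zero_le_one
          (fun r _ => by rw [abs_of_nonneg (hat_nonneg _ _ _)]; exact hat_le_one _ _ _)
        exact (abs_le.mp h).2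
      have hQuN : Q N ≤ 1 := by
        have h1 : Q N ≤ ∫ _r, (1:ℝ) ∂(FSt T ψ hT hψ).measure :=
          integral_mono (integrable_hat _ _) (integrable_const 1)
            (fun r => hat_le_one _ _ _)
        rwa [integral_const, probReal_univ, one_smul] at h1
      have h3 := hPl N
      have h4 := hQl N
      rw [hFFN] at h3 h4
      rw [hd]; dsimp only
      linarith
    -- the approximant G
    set u : ℕ → ℝ → ℝ := fun i r => hat (t (i+1)) δ r - hat (t i) δ r with hu
    have hu_cont : ∀ i, Continuous (u i) := fun i =>
      (continuous_hat _ _).sub (continuous_hat _ _)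
    have hu_nonneg : ∀ i r, 0 ≤ u i r := fun i r => sub_nonneg.2
      (hat_mono_t _ hδpos (by rw [htsucc]; linarith) r)
    set G : ℝ → ℝ := fun r => ∑ i ∈ Finset.range N, g (t (i+1)) * u i r with hG
    have hG_cont : Continuous G := by
      rw [hG]
      exact continuous_finset_sum _ (fun i _ => continuous_const.mul (hu_cont i))
    have hsumu : ∀ r, ∑ i ∈ Finset.range N, u i r = hat (t N) δ r - hat (t 0) δ r :=
      fun r => Finset.sum_range_sub (fun i => hat (t i) δ r) N
    -- pointwise estimate
    have hGest : ∀ r ∈ Set.Icc (-‖T‖) ‖T‖, |G r - g r| ≤ ε/4 := by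
      rintro r ⟨hr1, hr2⟩
      have h1 : hat (t N) δ r = 1 := hat_eq_one hδpos (by rw [htN]; linarith)
      have ht0 : t 0 = -‖T‖-2 := by rw [ht]; simp
      have h0 : hat (t 0) δ r = 0 := hat_eq_zero hδpos (by rw [ht0]; linarith)
      have hsum1 : ∑ i ∈ Finset.range N, u i r = 1 := by rw [hsumu r, h1, h0]; ring
      have hgr : g r = ∑ i ∈ Finset.range N, g r * u i r := by
        rw [← Finset.mul_sum, hsum1, mul_one]
      have hdiff : G r - g r = ∑ i ∈ Finset.range N, (g (t (i+1)) - g r) * u i r := by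
        rw [hG]; dsimp only
        rw [hgr, ← Finset.sum_sub_distrib]
        congr 1; funext i; rw [← hgr]; ring
      rw [hdiff]
      refine (Finset.abs_sum_le_sum_abs _ _).trans ?_
      have hterm : ∀ i ∈ Finset.range N, |(g (t (i+1)) - g r) * u i r| ≤ (ε/4) * u i r := by
        intro i hi
        rw [abs_mul, abs_of_nonneg (hu_nonneg i r)]
        rcases eq_or_lt_of_le (hu_nonneg i r) with h | h
        · rw [← h]; simp
        · have hri : t i < r := by
            by_contra hcon
            push_neg at hcon
            have e1 : hat (t i) δ r = 1 := hat_eq_one hδpos hcon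
            have e2 : hat (t (i+1)) δ r = 1 :=
              hat_eq_one hδpos (hcon.trans (by rw [htsucc]; linarith))
            rw [hu] at h; dsimp only at h
            rw [e1, e2] at h; simp at h
          have hri2 : r < t (i+1) + δ := by
            by_contra hcon
            push_neg at hcon
            have e1 : hat (t (i+1)) δ r = 0 := hat_eq_zero hδpos hcon
            have e2 : hat (t i) δ r = 0 := hat_eq_zero hδpos
              (by have := htsucc i; linarith)
            rw [hu] at h; dsimp only at h
            rw [e1, e2] at h; simp at h
          have hdist : |t (i+1) - r| < δ₀ := by
            rw [abs_sub_lt_iff]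
            constructor
            · have := htsucc i; linarith
            · linarith
          have hiJ : t (i+1) ∈ Set.Icc (-‖T‖-2) (‖T‖+2) :=
            htJ (i+1) (by have := Finset.mem_range.mp hi; omega)
          have hrJ : r ∈ Set.Icc (-‖T‖-2) (‖T‖+2) := ⟨by linarith, by linarith⟩
          have hb := hucg _ hiJ _ hrJ (by rw [Real.dist_eq]; exact hdist)
          rw [Real.dist_eq] at hb
          exact mul_le_mul_of_nonneg_right hb.le (hu_nonneg i r)
      refine (Finset.sum_le_sum hterm).trans ?_
      rw [← Finset.mul_sum, hsum1, mul_one]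
    -- φ(G)
    have hphiG : phi T ψ G = ∑ i ∈ Finset.range N, g (t (i+1)) * (P (i+1) - P i) := by
      rw [hG]
      rw [phi_sum hT (Finset.range N) (fun i r => g (t (i+1)) * u i r)
        (fun i _ => continuous_const.mul (hu_cont i))]
      refine Finset.sum_congr rfl (fun i _ => ?_)
      rw [phi_const_mul hT _ _ (hu_cont i)]
      congr 1
      have : phi T ψ (fun r => hat (t (i+1)) δ r - hat (t i) δ r)
          = phi T ψ (hat (t (i+1)) δ) - phi T ψ (hat (t i) δ) :=
        phi_sub hT _ _ (continuous_hat _ _) (continuous_hat _ _)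
      rw [hu]; dsimp only
      rw [this, hP]
    -- ∫ G
    have hintG : ∫ r, G r ∂(FSt T ψ hT hψ).measure
        = ∑ i ∈ Finset.range N, g (t (i+1)) * (Q (i+1) - Q i) := by
      rw [hG]
      have hfi : ∀ i ∈ Finset.range N,
          Integrable (fun r => g (t (i+1)) * u i r) (FSt T ψ hT hψ).measure := fun i _ =>
        ((integrable_hat (t (i+1)) δ).sub (integrable_hat (t i) δ)).const_mul _
      rw [integral_finset_sum _ hfi]
      refine Finset.sum_congr rfl (fun i _ => ?_)
      rw [integral_const_mul]
      congr 1
      rw [hu]; dsimp only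
      rw [integral_sub (integrable_hat _ _) (integrable_hat _ _), hQ]
    -- Abel bound
    have habel : |(∫ r, G r ∂(FSt T ψ hT hψ).measure) - phi T ψ G| ≤ ε/4 := by
      rw [hintG, hphiG, ← Finset.sum_sub_distrib]
      have hterm : ∀ i ∈ Finset.range N,
          g (t (i+1)) * (Q (i+1) - Q i) - g (t (i+1)) * (P (i+1) - P i)
          = (g (t (i+1)) - g (t (i+2))) * d (i+1)
            + (g (t (i+2)) * d (i+1) - g (t (i+1)) * d i) := by
        intro i _
        rw [hd]; dsimp only; ring
      rw [Finset.sum_congr rfl hterm, Finset.sum_add_distrib,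
        Finset.sum_range_sub (fun i => g (t (i+1)) * d i) N, hdN, hd0, mul_zero, mul_zero,
        sub_zero, add_zero]
      refine (Finset.abs_sum_le_sum_abs _ _).trans ?_
      have hterm2 : ∀ i ∈ Finset.range N, |(g (t (i+1)) - g (t (i+2))) * d (i+1)|
          ≤ (ε/4) * (FF T ψ (t (i+2)) - FF T ψ (t (i+1))) := by
        intro i hi
        rw [abs_mul]
        have hiJ1 : t (i+1) ∈ Set.Icc (-‖T‖-2) (‖T‖+2) :=
          htJ (i+1) (by have := Finset.mem_range.mp hi; omega)
        have hiJ2 : t (i+2) ∈ Set.Icc (-‖T‖-2) (‖T‖+2) :=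
          htJ (i+2) (by have := Finset.mem_range.mp hi; omega)
        have hdist : dist (t (i+1)) (t (i+2)) < δ₀ := by
          rw [Real.dist_eq, abs_sub_lt_iff]
          have := htsucc (i+1)
          constructor <;> linarith
        have hgb := (hucg _ hiJ1 _ hiJ2 hdist).le
        rw [Real.dist_eq] at hgb
        have hdb := hdabs (i+1)
        exact mul_le_mul hgb hdb (abs_nonneg _) (by positivity)
      refine (Finset.sum_le_sum hterm2).trans ?_
      rw [← Finset.mul_sum]
      have htel : ∑ i ∈ Finset.range N, (FF T ψ (t (i+2)) - FF T ψ (t (i+1)))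
          = FF T ψ (t (N+1)) - FF T ψ (t 1) :=
        Finset.sum_range_sub (fun i => FF T ψ (t (i+1))) N
      rw [htel]
      have h1 := FF_le_one (T := T) hψ (t (N+1))
      have h2 := FF_nonneg (T := T) (ψ := ψ) (t 1)
      nlinarith
    -- |∫g − ∫G| ≤ ε/4
    have hae : ∀ᵐ r ∂(FSt T ψ hT hψ).measure, r ∈ Set.Icc (-‖T‖) ‖T‖ := by
      rw [ae_iff]
      exact FSt_compl_null hT hψ
    have hint_gG : |(∫ r, g r ∂(FSt T ψ hT hψ).measure)
        - ∫ r, G r ∂(FSt T ψ hT hψ).measure| ≤ ε/4 := by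
      have hiG : Integrable G (FSt T ψ hT hψ).measure := by
        rw [hG]
        exact integrable_finset_sum _ (fun i _ =>
          ((integrable_hat (t (i+1)) δ).sub (integrable_hat (t i) δ)).const_mul _)
      have hig : Integrable g (FSt T ψ hT hψ).measure :=
        integrable_of_bdd hg.aestronglyMeasurable hc
      rw [← integral_sub hig hiG]
      have hb : ∀ᵐ r ∂(FSt T ψ hT hψ).measure, ‖g r - G r‖ ≤ ε/4 := by
        filter_upwards [hae] with r hr
        rw [Real.norm_eq_abs, abs_sub_comm]
        exact hGest r hr
      have hni := norm_integral_le_of_norm_le_const hb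
      rw [probReal_univ, mul_one] at hni
      rwa [Real.norm_eq_abs] at hni
    -- |φG − φg| ≤ ε/4
    have hphi_gG : |phi T ψ G - phi T ψ g| ≤ ε/4 := by
      have hps : phi T ψ (fun r => G r - g r) = phi T ψ G - phi T ψ g :=
        phi_sub hT _ _ hG_cont hg
      rw [← hps]
      refine phi_abs_le hψ (by positivity) (fun r hr => ?_)
      have hrIcc : r ∈ Set.Icc (-‖T‖) ‖T‖ := by
        have := abs_le.mp (spec_abs_le hr)
        exact ⟨this.1, this.2⟩
      exact hGest r hrIcc
    calc |(∫ r, g r ∂(FSt T ψ hT hψ).measure) - phi T ψ g|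
        ≤ |(∫ r, g r ∂(FSt T ψ hT hψ).measure) - ∫ r, G r ∂(FSt T ψ hT hψ).measure|
          + |(∫ r, G r ∂(FSt T ψ hT hψ).measure) - phi T ψ g| := abs_sub_le _ _ _
      _ ≤ |(∫ r, g r ∂(FSt T ψ hT hψ).measure) - ∫ r, G r ∂(FSt T ψ hT hψ).measure|
          + (|(∫ r, G r ∂(FSt T ψ hT hψ).measure) - phi T ψ G|
            + |phi T ψ G - phi T ψ g|) := by
            have := abs_sub_le (∫ r, G r ∂(FSt T ψ hT hψ).measure) (phi T ψ G) (phi T ψ g)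
            linarith
      _ ≤ ε/4 + (ε/4 + ε/4) := by
            have := hint_gG; have := habel; have := hphi_gG; linarith
      _ ≤ ε := by linarith
  have h0 : |(∫ r, g r ∂(FSt T ψ hT hψ).measure) - phi T ψ g| ≤ 0 := by
    refine le_of_forall_pos_le_add (fun ε hε => ?_)
    have := key ε hε
    linarith
  have h1 : (∫ r, g r ∂(FSt T ψ hT hψ).measure) - phi T ψ g = 0 := by
    have := abs_nonneg ((∫ r, g r ∂(FSt T ψ hT hψ).measure) - phi T ψ g)
    have habs : |(∫ r, g r ∂(FSt T ψ hT hψ).measure) - phi T ψ g| = 0 := le_antisymm h0 this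
    exact abs_eq_zero.mp habs
  linarith

end Rep

/-! ### the spectral measure and the main theorem -/

section Spec

variable [Nontrivial H] {T : H →L[ℂ] H} {ψ : H}

lemma exists_specMeasure (hT : IsSelfAdjoint T) (hψ : ‖ψ‖ = 1) :
    ∃ ν : Measure ℝ, IsSpecMeasure T ψ ν ∧
      ∀ g : ℝ → ℝ, Continuous g → (∀ r ∈ spectrum ℝ T, g r = 0) → (∀ r, |g r| ≤ 1) →
        (∫ r, g r ∂ν) = 0 := by
  refine ⟨(FSt T ψ hT hψ).measure, ⟨FSt_prob hT hψ, FSt_compl_null hT hψ, ?_⟩, ?_⟩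
  · intro n
    haveI := FSt_prob hT hψ
    set cl : ℝ → ℝ := fun r => max (-‖T‖) (min ‖T‖ r) with hcl
    have hclcont : Continuous cl := continuous_const.max (continuous_const.min continuous_id)
    have hclI : ∀ r ∈ Set.Icc (-‖T‖) ‖T‖, cl r = r := by
      rintro r ⟨h1, h2⟩
      rw [hcl]; dsimp only
      rw [min_eq_right h2, max_eq_right h1]
    have hclbd : ∀ r, |cl r| ≤ ‖T‖ := by
      intro r
      rw [abs_le]
      refine ⟨le_max_left _ _, ?_⟩
      rw [hcl]; dsimp only
      exact max_le (by linarith [norm_nonneg T]) (min_le_left _ _)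
    have hae : ∀ᵐ r ∂(FSt T ψ hT hψ).measure, r ∈ Set.Icc (-‖T‖) ‖T‖ := by
      rw [ae_iff]; exact FSt_compl_null hT hψ
    have hcongr : (∫ r, r ^ n ∂(FSt T ψ hT hψ).measure)
        = ∫ r, (cl r) ^ n ∂(FSt T ψ hT hψ).measure := by
      refine integral_congr_ae ?_
      filter_upwards [hae] with r hr
      rw [hclI r hr]
    have hbd : ∀ r, |(cl r) ^ n| ≤ ‖T‖ ^ n := by
      intro r
      rw [abs_pow]
      exact pow_le_pow_left₀ (abs_nonneg _) (hclbd r) n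
    have hrep := integral_FSt hT hψ (fun r => (cl r) ^ n) (hclcont.pow n) hbd
    rw [hcongr, hrep]
    have hEq : Set.EqOn (fun r => (cl r)^n) (fun r : ℝ => r^n) (spectrum ℝ T) := by
      intro r hr
      have h := abs_le.mp (spec_abs_le hr)
      dsimp only
      rw [hclI r ⟨h.1, h.2⟩]
    have hpow : cfc (fun r : ℝ => r ^ n) T = T ^ n := by
      rw [← cfc_pow_id (R := ℝ) T n]
    rw [phi, cfc_congr hEq, hpow]
  · intro g hgc hg0 hgb
    rw [integral_FSt hT hψ g hgc hgb, phi_zero' hT hg0]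

end Spec

theorem stmt4 (hdim : ¬ FiniteDimensional ℂ H) (η : Measure ℂ) (hη : IsEta η)
    (T : H →L[ℂ] H) (hT : IsSelfAdjoint T) (f : H → ℝ) (hf : HiddenObs η f T) :
    ∃ g : H → ℝ, HiddenObs η g T ∧
      (∃ N : Set H, NullPB η N ∧ ∀ x ∉ N, g x = f x) ∧
      closure (Set.range g) = spectrum ℝ T := by
  classical
  haveI hprob : IsProbabilityMeasure η := hη.1
  haveI hnoatoms : NullSingletonClass η := hη.2.1
  haveI hnt : Nontrivial H := by
    by_contra hn
    rw [not_nontrivial_iff_subsingleton] at hn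
    exact hdim (Module.Finite.of_basis (Module.Basis.empty _ : Module.Basis (Fin 0) ℂ H))
  have hKclosed : IsClosed (spectrum ℝ T) := spectrum.isClosed T
  have hKne : (spectrum ℝ T).Nonempty := hT.spectrum_nonempty
  have hlinemeas : ∀ (ψ : H), ‖ψ‖ = 1 → Measurable (fun z : ℂ => f (z • ψ)) :=
    fun ψ hψ B hB => hf.1.1 B hB ψ hψ
  -- the bump function vanishing exactly on the spectrum
  set b₀ : ℝ → ℝ := fun r => min (Metric.infDist r (spectrum ℝ T)) 1 with hb₀
  have hb₀cont : Continuous b₀ := (Metric.continuous_infDist_pt _).min continuous_const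
  have hb₀nonneg : ∀ r, 0 ≤ b₀ r := fun r => le_min Metric.infDist_nonneg zero_le_one
  have hb₀le : ∀ r, |b₀ r| ≤ 1 := fun r => by
    rw [abs_of_nonneg (hb₀nonneg r)]; exact min_le_right _ _
  have hb₀zero : ∀ r, b₀ r = 0 ↔ r ∈ spectrum ℝ T := by
    intro r
    constructor
    · intro h
      by_contra hrK
      have hpos : 0 < Metric.infDist r (spectrum ℝ T) :=
        (hKclosed.notMem_iff_infDist_pos hKne).mp hrK
      have : 0 < b₀ r := lt_min hpos one_pos
      rw [h] at this
      exact lt_irrefl 0 this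
    · intro h
      rw [hb₀]; dsimp only
      rw [Metric.infDist_zero_of_mem h]
      exact min_eq_left zero_le_one
  have hb₀memB : MemB b₀ := by
    refine ⟨hb₀cont.measurable, fun s _ => ?_⟩
    refine (Metric.isBounded_Icc (0:ℝ) 1).subset ?_
    rintro _ ⟨r, _, rfl⟩
    exact ⟨hb₀nonneg r, (abs_le.mp (hb₀le r)).2⟩
  obtain ⟨S, hSbfc, hSorth⟩ := hf.2 b₀ hb₀memB
  have hSzero : ∀ ψ : H, ‖ψ‖ = 1 → expVal S ψ = 0 := by
    intro ψ hψ
    obtain ⟨ν, hνspec, hνzero⟩ := exists_specMeasure hT hψ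
    rw [← hSbfc.2 ψ hψ ν hνspec]
    exact hνzero b₀ hb₀cont (fun r hr => (hb₀zero r).mpr hr) hb₀le
  -- the preimage of the complement of the spectrum is null on every line
  have hN₁ : ∀ ψ : H, ‖ψ‖ = 1 →
      η ((fun z : ℂ => z • ψ) ⁻¹' (f ⁻¹' (spectrum ℝ T)ᶜ)) = 0 := by
    intro ψ hψ
    have hint : lineIntegral η (b₀ ∘ f) ψ = 0 := by
      rw [hSorth.2.2.2 ψ hψ, hSzero ψ hψ]
    have hmeas : Measurable (fun z : ℂ => b₀ (f (z • ψ))) :=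
      hb₀cont.measurable.comp (hlinemeas ψ hψ)
    have hint2 : Integrable (fun z : ℂ => b₀ (f (z • ψ))) η :=
      (integrable_const (1:ℝ)).mono' hmeas.aestronglyMeasurable
        (Filter.Eventually.of_forall (fun z => by rw [Real.norm_eq_abs]; exact hb₀le _))
    have hzero : (fun z : ℂ => b₀ (f (z • ψ))) =ᵐ[η] 0 := by
      rw [← integral_eq_zero_iff_of_nonneg (fun z => hb₀nonneg _) hint2]
      exact hint
    rw [Filter.EventuallyEq, ae_iff] at hzero
    refine measure_mono_null ?_ hzero
    intro z hz
    simp only [Set.mem_setOf_eq, Pi.zero_apply]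
    intro hcon
    exact hz ((hb₀zero _).mp hcon)
  -- a unit vector and a countable family of points off the unit sphere
  obtain ⟨ψ₀, hψ₀⟩ := exists_norm_eq H zero_le_one
  set x : ℕ → H := fun n => ((((n:ℝ) + 2 : ℝ) : ℂ)) • ψ₀ with hx
  have hxnorm : ∀ n, ‖x n‖ = (n:ℝ) + 2 := by
    intro n
    rw [hx]; dsimp only
    rw [norm_smul, hψ₀, mul_one, Complex.norm_real, Real.norm_eq_abs,
      abs_of_nonneg (by positivity)]
  have hxinj : Function.Injective x := by
    intro n m h
    have h2 := congrArg norm h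
    rw [hxnorm, hxnorm] at h2
    have : (n:ℝ) = m := by linarith
    exact_mod_cast this
  -- a dense sequence in the spectrum
  haveI : Nonempty (spectrum ℝ T) := hKne.to_subtype
  set s : ℕ → ℝ := fun n => (TopologicalSpace.denseSeq (spectrum ℝ T) n : ℝ) with hs
  have hsK : ∀ n, s n ∈ spectrum ℝ T := fun n => (TopologicalSpace.denseSeq (spectrum ℝ T) n).2
  have hsdense : spectrum ℝ T ⊆ closure (Set.range s) := by
    intro k hk
    have h1 : (⟨k, hk⟩ : spectrum ℝ T) ∈
        closure (Set.range (TopologicalSpace.denseSeq (spectrum ℝ T))) :=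
      TopologicalSpace.denseRange_denseSeq _ _
    exact map_mem_closure continuous_subtype_val h1
      (by rintro _ ⟨n, rfl⟩; exact ⟨n, rfl⟩)
  -- the modified function
  set A : Set H := Set.range x with hA
  set g : H → ℝ := fun y =>
    if h : ∃ n, y = x n then s (Nat.find h)
    else if f y ∈ spectrum ℝ T then f y else s 0 with hg
  have hgnA : ∀ y, y ∉ A → g y = if f y ∈ spectrum ℝ T then f y else s 0 := by
    intro y hy
    rw [hg]; dsimp only
    rw [dif_neg (fun ⟨n, hn⟩ => hy ⟨n, hn.symm⟩)]
  have hgx : ∀ n, g (x n) = s n := by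
    intro n
    have hex : ∃ m, x n = x m := ⟨n, rfl⟩
    rw [hg]; dsimp only
    rw [dif_pos hex]
    exact congrArg s (hxinj (Nat.find_spec hex)).symm
  have hgrange : ∀ y, g y ∈ spectrum ℝ T := by
    intro y
    rw [hg]; dsimp only
    split_ifs with h1 h2
    · exact hsK _
    · exact h2
    · exact hsK 0
  have hgf : ∀ y, y ∉ (f ⁻¹' (spectrum ℝ T)ᶜ ∪ A) → g y = f y := by
    intro y hy
    obtain ⟨hy1, hy2⟩ := not_or.mp (by rwa [Set.mem_union] at hy)
    rw [hgnA y hy2, if_pos (by simpa using hy1)]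
  -- A is countable on every line
  have hcnt : ∀ (ψ : H), ‖ψ‖ = 1 → Set.Countable ((fun z : ℂ => z • ψ) ⁻¹' A) := by
    intro ψ hψ
    have hdec : (fun z : ℂ => z • ψ) ⁻¹' A = ⋃ n, {z : ℂ | z • ψ = x n} := by
      ext z
      simp only [Set.mem_preimage, hA, Set.mem_range, Set.mem_iUnion, Set.mem_setOf_eq]
      exact ⟨fun ⟨n, hn⟩ => ⟨n, hn.symm⟩, fun ⟨n, hn⟩ => ⟨n, hn.symm⟩⟩
    rw [hdec]
    refine Set.countable_iUnion (fun n => Set.Subsingleton.countable ?_)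
    intro z1 h1 z2 h2
    have h3 : z1 • ψ = z2 • ψ := by
      rw [Set.mem_setOf_eq] at h1 h2
      rw [h1, h2]
    have h4 : (z1 - z2) • ψ = 0 := by rw [sub_smul, h3, sub_self]
    have h5 : ψ ≠ 0 := by
      intro hcon
      rw [hcon, norm_zero] at hψ
      exact one_ne_zero hψ.symm
    rcases smul_eq_zero.mp h4 with h6 | h6
    · exact sub_eq_zero.mp h6
    · exact absurd h6 h5
  have hA0 : ∀ (ψ : H), ‖ψ‖ = 1 → η ((fun z : ℂ => z • ψ) ⁻¹' A) = 0 :=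
    fun ψ hψ => (hcnt ψ hψ).measure_zero η
  have hNull : ∀ (ψ : H), ‖ψ‖ = 1 →
      η ((fun z : ℂ => z • ψ) ⁻¹' (f ⁻¹' (spectrum ℝ T)ᶜ ∪ A)) = 0 := by
    intro ψ hψ
    rw [Set.preimage_union]
    exact measure_union_null (hN₁ ψ hψ) (hA0 ψ hψ)
  have hNpb : NullPB η (f ⁻¹' (spectrum ℝ T)ᶜ ∪ A) := by
    constructor
    · intro ψ hψ
      rw [Set.preimage_union]
      exact (hf.1.1 _ hKclosed.measurableSet.compl ψ hψ).union (hcnt ψ hψ).measurableSet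
    · intro ψ hψ
      exact hNull ψ hψ
  -- closure of the range
  have hrange : closure (Set.range g) = spectrum ℝ T := by
    apply Set.Subset.antisymm
    · exact closure_minimal (by rintro _ ⟨y, rfl⟩; exact hgrange y) hKclosed
    · intro k hk
      refine closure_mono ?_ (hsdense hk)
      rintro _ ⟨n, rfl⟩
      exact ⟨x n, hgx n⟩
  -- measurability of g along lines
  have hgline : ∀ (ψ : H), ‖ψ‖ = 1 → Measurable (fun z : ℂ => g (z • ψ)) := by
    intro ψ hψ
    intro B hB
    have hdecomp : (fun z : ℂ => g (z • ψ)) ⁻¹' B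
        = (((fun z : ℂ => z • ψ) ⁻¹' A) ∩ ((fun z : ℂ => g (z • ψ)) ⁻¹' B))
          ∪ (((fun z : ℂ => if f (z • ψ) ∈ spectrum ℝ T then f (z • ψ) else s 0) ⁻¹' B)
              \ ((fun z : ℂ => z • ψ) ⁻¹' A)) := by
      ext z
      constructor
      · intro hz
        by_cases hzA : z • ψ ∈ A
        · exact Or.inl ⟨hzA, hz⟩
        · refine Or.inr ⟨?_, hzA⟩
          have he := hgnA _ hzA
          simp only [Set.mem_preimage]
          rw [← he]
          exact hz
      · rintro (⟨_, hz⟩ | ⟨hz, hzA⟩)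
        · exact hz
        · have he := hgnA _ hzA
          simp only [Set.mem_preimage] at hz ⊢
          rw [he]
          exact hz
    rw [hdecomp]
    refine MeasurableSet.union
      (((hcnt ψ hψ).mono Set.inter_subset_left).measurableSet) ?_
    refine MeasurableSet.diff ?_ (hcnt ψ hψ).measurableSet
    have hmf := hlinemeas ψ hψ
    exact (Measurable.ite (hmf hKclosed.measurableSet) hmf measurable_const) hB
  -- assembling
  have hgbd : ∀ y, |g y| ≤ ‖T‖ := fun y => spec_abs_le (hgrange y)
  have hEmptyNull : NullPB η (∅ : Set H) := by
    constructor
    · intro ψ hψ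
      simp
    · intro ψ hψ
      simp [lineMass]
  refine ⟨g, ⟨⟨?_, ?_, hT, ?_⟩, ?_⟩, ⟨f ⁻¹' (spectrum ℝ T)ᶜ ∪ A, hNpb, hgf⟩, hrange⟩
  · -- PseudoBorelFun g
    exact fun B hB ψ hψ => hgline ψ hψ hB
  · -- EssBddPB
    exact ⟨∅, hEmptyNull, ‖T‖, fun y _ => hgbd y⟩
  · -- line integrals
    intro ψ hψ
    have hcongr : lineIntegral η g ψ = lineIntegral η f ψ := by
      refine integral_congr_ae ?_
      rw [Filter.EventuallyEq, ae_iff]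
      refine measure_mono_null ?_ (hNull ψ hψ)
      intro z hz
      by_contra hcon
      exact hz (hgf _ hcon)
    exact hcongr.trans (hf.1.2.2.2 ψ hψ)
  · -- compositions
    intro b hb
    obtain ⟨S', hbfc', horth'⟩ := hf.2 b hb
    refine ⟨S', hbfc', ?_, ?_, hbfc'.1, ?_⟩
    · -- PseudoBorelFun (b ∘ g)
      exact fun B hB ψ hψ => (hb.1.comp (hgline ψ hψ)) hB
    · -- EssBddPB (b ∘ g)
      obtain ⟨C, hC⟩ := isBounded_iff_forall_norm_le.mp
        (hb.2 (Set.Icc (-‖T‖) ‖T‖) (Metric.isBounded_Icc _ _))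
      refine ⟨∅, hEmptyNull, C, fun y _ => ?_⟩
      have hmem : b (g y) ∈ b '' Set.Icc (-‖T‖) ‖T‖ := by
        refine ⟨g y, ?_, rfl⟩
        have h := abs_le.mp (hgbd y)
        exact ⟨h.1, h.2⟩
      have := hC _ hmem
      rwa [Real.norm_eq_abs] at this
    · -- line integrals of b ∘ g
      intro ψ hψ
      have hcongr : lineIntegral η (b ∘ g) ψ = lineIntegral η (b ∘ f) ψ := by
        refine integral_congr_ae ?_
        rw [Filter.EventuallyEq, ae_iff]
        refine measure_mono_null ?_ (hNull ψ hψ)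
        intro z hz
        by_contra hcon
        exact hz (congrArg b (hgf _ hcon))
      exact hcongr.trans (horth'.2.2.2 ψ hψ)


end HiddenVar
end
end

section
/- For every orthogonal projection E of H there exists a hidden proposition L ⊆ H with σ(χ_L) = E. -/
open MeasureTheory

noncomputable section

namespace HiddenVar

variable {H : Type*} [NormedAddCommGroup H] [InnerProductSpace ℂ H] [CompleteSpace H]

/-! ### Auxiliary material for `stmt5` -/

section Stmt5Aux

open Set
open scoped InnerProductSpace

instance : Fact (0 < 2 * Real.pi) := ⟨by positivity⟩

/-- The circle of angles. -/
abbrev Circ := AddCircle (2 * Real.pi)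

/-- The argument of a complex number, as a point of the circle. -/
def angArg (z : ℂ) : Circ := ((Complex.arg z : ℝ) : Circ)

lemma measurable_angArg : Measurable angArg :=
  AddCircle.measurable_mk'.comp Complex.measurable_arg

lemma angArg_rot (θ : ℝ) {z : ℂ} (hz : z ≠ 0) :
    angArg (Complex.exp (θ * Complex.I) * z) = (θ : Circ) + angArg z := by
  have h := Complex.arg_mul_coe_angle (Complex.exp_ne_zero (θ * Complex.I)) hz
  have h2 : (Complex.arg (Complex.exp (θ * Complex.I)) : Real.Angle) = (θ : Real.Angle) := by
    rw [Complex.arg_exp_mul_I]; exact Real.Angle.coe_toIocMod θ (-Real.pi)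
  exact h.trans (by rw [h2]; rfl)

/-- The pushforward of `η` to the circle of angles. -/
def circMeasure (η : Measure ℂ) : Measure Circ := Measure.map angArg η

lemma circMeasure_prob {η : Measure ℂ} (hη : IsEta η) :
    IsProbabilityMeasure (circMeasure η) := by
  haveI := hη.1
  exact Measure.isProbabilityMeasure_map measurable_angArg.aemeasurable

lemma circMeasure_inv {η : Measure ℂ} (hη : IsEta η) :
    (circMeasure η).IsAddLeftInvariant := by
  haveI : NullSingletonClass η := hη.2.1
  constructor
  intro g
  obtain ⟨θ, rfl⟩ := QuotientAddGroup.mk_surjective g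
  rw [circMeasure, Measure.map_map (measurable_const_add _) measurable_angArg]
  have hae : (fun z : ℂ => (θ : Circ) + angArg z)
      =ᵐ[η] fun z => angArg (Complex.exp (θ * Complex.I) * z) := by
    have h0 : η {(0 : ℂ)} = 0 := measure_singleton 0
    filter_upwards [measure_eq_zero_iff_ae_notMem.mp h0] with z hz
    exact (angArg_rot θ hz).symm
  calc Measure.map ((fun a : Circ => (θ : Circ) + a) ∘ angArg) η
      = Measure.map (fun z => angArg (Complex.exp (θ * Complex.I) * z)) η :=
        Measure.map_congr hae
    _ = Measure.map (angArg ∘ fun z => Complex.exp (θ * Complex.I) * z) η := rfl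
    _ = Measure.map angArg (Measure.map (fun z => Complex.exp (θ * Complex.I) * z) η) :=
        (Measure.map_map measurable_angArg (measurable_const_mul _)).symm
    _ = circMeasure η := by rw [hη.2.2 θ]; rfl

lemma circMeasure_of_volume {η : Measure ℂ} (hη : IsEta η) {s : Set Circ} {p : ℝ}
    (hp : 0 ≤ p) (hv : volume s = ENNReal.ofReal (2 * Real.pi * p)) :
    circMeasure η s = ENNReal.ofReal p := by
  haveI := circMeasure_prob hη
  haveI := circMeasure_inv hη
  have h := Measure.isAddInvariant_eq_smul_of_compactSpace (circMeasure η) volume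
  set c := Measure.addHaarScalarFactor (circMeasure η) volume
  have huniv : (c : ENNReal) * ENNReal.ofReal (2 * Real.pi) = 1 := by
    have h2 := congrArg (fun m : Measure Circ => m univ) h
    simp only [measure_univ, Measure.smul_apply, AddCircle.measure_univ, smul_eq_mul] at h2
    exact h2.symm
  have h3 : circMeasure η s = (c : ENNReal) * volume s := by
    rw [h]; rfl
  rw [h3, hv, ENNReal.ofReal_mul (by positivity), ← mul_assoc, huniv, one_mul]

/-- Coordinate for the circle, given by the interval `(0, 2π]`. -/
def arcFun (a : Circ) : ℝ := (AddCircle.measurableEquivIoc (2 * Real.pi) 0 a : ℝ)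

lemma measurable_arcFun : Measurable arcFun :=
  measurable_subtype_coe.comp (AddCircle.measurableEquivIoc (2 * Real.pi) 0).measurable

/-- The arc of angular length `2πp` in the circle. -/
def arc (p : ℝ) : Set Circ := arcFun ⁻¹' Iic (2 * Real.pi * p)

lemma measurable_arc (p : ℝ) : MeasurableSet (arc p) :=
  measurable_arcFun measurableSet_Iic

lemma arcFun_coe {x : ℝ} (hx : x ∈ Ioc 0 (0 + 2 * Real.pi)) :
    arcFun ((x : ℝ) : Circ) = x := by
  have h : AddCircle.measurableEquivIoc (2 * Real.pi) 0 ((x : ℝ) : Circ) = ⟨x, hx⟩ := by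
    show AddCircle.equivIoc (2 * Real.pi) 0 ((x : ℝ) : Circ) = ⟨x, hx⟩
    rw [Equiv.apply_eq_iff_eq_symm_apply]
    rfl
  rw [arcFun, h]

lemma volume_arc {p : ℝ} (hp0 : 0 ≤ p) (hp1 : p ≤ 1) :
    volume (arc p) = ENNReal.ofReal (2 * Real.pi * p) := by
  rw [AddCircle.add_projection_respects_measure (2 * Real.pi) 0 (measurable_arc p)]
  have hset : (QuotientAddGroup.mk ⁻¹' arc p) ∩ Ioc 0 (0 + 2 * Real.pi)
      = Ioc 0 (2 * Real.pi * p) := by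
    have h2 : 2 * Real.pi * p ≤ 2 * Real.pi := by nlinarith [Real.pi_pos]
    ext x
    constructor
    · rintro ⟨hmem, hIoc⟩
      have hcoe := arcFun_coe hIoc
      refine ⟨hIoc.1, ?_⟩
      have hx : arcFun ((x : ℝ) : Circ) ≤ 2 * Real.pi * p := hmem
      rwa [hcoe] at hx
    · rintro ⟨hx0, hxle⟩
      have hIoc : x ∈ Ioc 0 (0 + 2 * Real.pi) := ⟨hx0, by linarith⟩
      refine ⟨?_, hIoc⟩
      show arcFun ((x : ℝ) : Circ) ≤ 2 * Real.pi * p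
      rw [arcFun_coe hIoc]; exact hxle
  rw [hset, Real.volume_Ioc, sub_zero]

lemma circMeasure_arc {η : Measure ℂ} (hη : IsEta η) {p : ℝ} (hp0 : 0 ≤ p) (hp1 : p ≤ 1) :
    circMeasure η (arc p) = ENNReal.ofReal p :=
  circMeasure_of_volume hη hp0 (volume_arc hp0 hp1)

lemma eta_sector {η : Measure ℂ} (hη : IsEta η) {A : Set Circ} (hA : MeasurableSet A) {c : ℂ}
    (hc : ‖c‖ = 1) :
    η {z : ℂ | z ≠ 0 ∧ angArg (z * c) ∈ A} = circMeasure η A := by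
  haveI : NullSingletonClass η := hη.2.1
  have hc0 : c ≠ 0 := by intro h; rw [h] at hc; simp at hc
  have hcexp : Complex.exp ((Complex.arg c : ℝ) * Complex.I) = c := by
    have h := Complex.norm_mul_exp_arg_mul_I c
    rwa [show ((‖c‖ : ℝ) : ℂ) = 1 by
      rw [hc, Complex.ofReal_one], one_mul] at h
  set S₀ : Set ℂ := {w : ℂ | w ≠ 0} ∩ angArg ⁻¹' A with hS₀
  have hS₀meas : MeasurableSet S₀ :=
    (measurableSet_singleton (0:ℂ)).compl.inter (measurable_angArg hA)
  have hpre : {z : ℂ | z ≠ 0 ∧ angArg (z * c) ∈ A} = (fun z => c * z) ⁻¹' S₀ := by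
    ext z
    simp only [hS₀, mem_setOf_eq, mem_preimage, mem_inter_iff, mul_comm c z]
    constructor
    · rintro ⟨h1, h2⟩; exact ⟨mul_ne_zero h1 hc0, h2⟩
    · rintro ⟨h1, h2⟩; exact ⟨fun h => h1 (by rw [h, zero_mul]), h2⟩
  rw [hpre]
  have hmap : η ((fun z => c * z) ⁻¹' S₀) = η S₀ := by
    conv_rhs => rw [← hη.2.2 (Complex.arg c)]
    rw [Measure.map_apply (measurable_const_mul _) hS₀meas, hcexp]
  rw [hmap]
  have hnull : η S₀ = η (angArg ⁻¹' A) := by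
    apply le_antisymm (measure_mono inter_subset_right)
    calc η (angArg ⁻¹' A) ≤ η (S₀ ∪ {0}) := by
          apply measure_mono; intro w hw
          by_cases h : w = 0
          · exact Or.inr (by simp [h])
          · exact Or.inl ⟨h, hw⟩
      _ ≤ η S₀ + η {0} := measure_union_le _ _
      _ = η S₀ := by rw [measure_singleton, add_zero]
  rw [hnull, circMeasure, Measure.map_apply measurable_angArg hA]

open scoped Classical in
/-- A choice of unit vector spanning a given complex line. -/
def lineRep (V : Submodule ℂ H) : H :=
  if h : ∃ u : H, ‖u‖ = 1 ∧ V = Submodule.span ℂ {u} then h.choose else 0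

/-- The chosen unit vector on the line through `x`. -/
def uvec (x : H) : H := lineRep (Submodule.span ℂ {x})

lemma uvec_spec {x : H} (hx : x ≠ 0) :
    ‖uvec x‖ = 1 ∧ Submodule.span ℂ {x} = Submodule.span ℂ {uvec x} := by
  classical
  have hnx : ‖x‖ ≠ 0 := norm_ne_zero_iff.mpr hx
  have hex : ∃ u : H, ‖u‖ = 1 ∧ Submodule.span ℂ {x} = Submodule.span ℂ {u} := by
    refine ⟨((‖x‖⁻¹ : ℝ) : ℂ) • x, ?_, ?_⟩
    · rw [norm_smul]
      simp [abs_of_nonneg (inv_nonneg.mpr (norm_nonneg x)), inv_mul_cancel₀ hnx]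
    · rw [Submodule.span_singleton_smul_eq]
      exact isUnit_iff_ne_zero.mpr (by simpa using hnx)
  rw [uvec, lineRep, dif_pos hex]
  exact ⟨hex.choose_spec.1, hex.choose_spec.2⟩

lemma uvec_smul {ψ : H} (hψ : ψ ≠ 0) {z : ℂ} (hz : z ≠ 0) :
    uvec (z • ψ) = uvec ψ := by
  rw [uvec, uvec, Submodule.span_singleton_smul_eq (isUnit_iff_ne_zero.mpr hz)]

lemma line_coord {ψ : H} (hψ : ‖ψ‖ = 1) :
    ‖(⟪uvec ψ, ψ⟫_ℂ)‖ = 1 ∧ ∀ z : ℂ, ⟪uvec ψ, z • ψ⟫_ℂ = z * ⟪uvec ψ, ψ⟫_ℂ := by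
  have hψ0 : ψ ≠ 0 := by intro h; rw [h] at hψ; simp at hψ
  obtain ⟨hu1, hsp⟩ := uvec_spec hψ0
  have hmem : ψ ∈ Submodule.span ℂ {uvec ψ} := by
    rw [← hsp]; exact Submodule.mem_span_singleton_self ψ
  obtain ⟨a, ha⟩ := Submodule.mem_span_singleton.mp hmem
  have hinner : ⟪uvec ψ, ψ⟫_ℂ = a := by
    have h2 : ⟪uvec ψ, a • uvec ψ⟫_ℂ = ⟪uvec ψ, ψ⟫_ℂ := by rw [ha]
    rw [← h2, inner_smul_right, inner_self_eq_norm_sq_to_K, hu1]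
    simp
  constructor
  · rw [hinner]
    have h3 : ‖a • uvec ψ‖ = 1 := by rw [ha]; exact hψ
    rwa [norm_smul, hu1, mul_one] at h3
  · intro z; rw [inner_smul_right]

lemma pow_proj {E : H →L[ℂ] H} (hproj : E * E = E) : ∀ n : ℕ, 1 ≤ n → E ^ n = E := by
  intro n hn
  induction n with
  | zero => omega
  | succ m ih =>
    rcases Nat.eq_or_lt_of_le hn with h | h
    · rw [← h, pow_one]
    · have hm : 1 ≤ m := by omega
      rw [pow_succ, ih (by omega), hproj]

lemma spec_integral {E : H →L[ℂ] H} (hproj : E * E = E) {ψ : H}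
    {ν : Measure ℝ} (hν : IsSpecMeasure E ψ ν) (b : ℝ → ℝ) :
    ∫ r, b r ∂ν = b 0 + (b 1 - b 0) * expVal E ψ := by
  haveI := hν.1
  set M := ‖E‖ with hM
  set p := expVal E ψ with hp
  have hae : ∀ᵐ r ∂ν, r ∈ Icc (-M) M := by
    rw [ae_iff]
    exact hν.2.1
  have hint : ∀ n : ℕ, Integrable (fun r : ℝ => r ^ n) ν := by
    intro n
    apply Integrable.mono' (integrable_const (M ^ n))
      ((measurable_id.pow_const n).aestronglyMeasurable)
    filter_upwards [hae] with r hr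
    have habs : |r| ≤ M := abs_le.mpr ⟨hr.1, hr.2⟩
    calc ‖r ^ n‖ = |r| ^ n := by rw [Real.norm_eq_abs, abs_pow]
      _ ≤ M ^ n := pow_le_pow_left₀ (abs_nonneg r) habs n
  have hmom : ∀ n : ℕ, 1 ≤ n → ∫ r, r ^ n ∂ν = p := by
    intro n hn
    rw [hν.2.2 n, pow_proj hproj n hn]
  have h23 : Integrable (fun r : ℝ => 2 * r ^ 3) ν := (hint 3).const_mul 2
  have h43 : Integrable (fun r : ℝ => r ^ 4 - 2 * r ^ 3) ν := (hint 4).sub h23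
  have hintf : Integrable (fun r : ℝ => (r ^ 4 - 2 * r ^ 3) + r ^ 2) ν := h43.add (hint 2)
  have hkey : ∫ r, ((r ^ 4 - 2 * r ^ 3) + r ^ 2) ∂ν = 0 := by
    rw [integral_add h43 (hint 2), integral_sub (hint 4) h23, integral_const_mul,
      hmom 4 (by omega), hmom 3 (by omega), hmom 2 (by omega)]
    ring
  have hsq : (fun r : ℝ => (r ^ 2 - r) ^ 2) = fun r : ℝ => (r ^ 4 - 2 * r ^ 3) + r ^ 2 := by
    funext r; ring
  have hzero : (fun r : ℝ => (r ^ 2 - r) ^ 2) =ᵐ[ν] 0 := by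
    apply (integral_eq_zero_iff_of_nonneg (fun r => sq_nonneg _) _).mp
    · rw [hsq]; exact hkey
    · rw [hsq]; exact hintf
  have hae01 : ∀ᵐ r ∂ν, r = 0 ∨ r = 1 := by
    filter_upwards [hzero] with r hr
    have h1 : (r ^ 2 - r) ^ 2 = 0 := hr
    have h2 : r ^ 2 - r = 0 := by
      exact pow_eq_zero_iff (by norm_num) |>.mp h1
    have h3 : r * (r - 1) = 0 := by ring_nf; linarith [h2]
    rcases mul_eq_zero.mp h3 with h | h
    · exact Or.inl h
    · exact Or.inr (by linarith)
  have hintid : Integrable (fun r : ℝ => r) ν := by simpa using hint 1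
  have hmean : ∫ r, r ∂ν = p := by simpa using hmom 1 le_rfl
  calc ∫ r, b r ∂ν = ∫ r, (b 0 + (b 1 - b 0) * r) ∂ν := by
        apply integral_congr_ae
        filter_upwards [hae01] with r hr
        rcases hr with h | h <;> subst h <;> ring
    _ = b 0 + (b 1 - b 0) * p := by
        have hlin : Integrable (fun r : ℝ => (b 1 - b 0) * r) ν := hintid.const_mul _
        rw [integral_add (integrable_const _) hlin, integral_const_mul, integral_const, hmean]
        simp

lemma expVal_proj_eq_normsq {E : H →L[ℂ] H} (hsa : IsSelfAdjoint E) (hproj : E * E = E)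
    (ψ : H) : expVal E ψ = ‖E ψ‖ ^ 2 := by
  have hadj : ContinuousLinearMap.adjoint E = E :=
    (ContinuousLinearMap.isSelfAdjoint_iff'.mp hsa)
  have h1 : E ψ = E (E ψ) := by
    conv_lhs => rw [← hproj]
    rfl
  have h2 : (⟪ψ, E ψ⟫_ℂ) = ⟪E ψ, E ψ⟫_ℂ := by
    conv_lhs => rw [h1]
    rw [← ContinuousLinearMap.adjoint_inner_left, hadj]
  rw [expVal, h2, inner_self_eq_norm_sq_to_K]
  norm_cast

lemma expVal_proj_mem {E : H →L[ℂ] H} (hsa : IsSelfAdjoint E) (hproj : E * E = E)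
    {ψ : H} (hψ : ‖ψ‖ = 1) : expVal E ψ ∈ Icc (0:ℝ) 1 := by
  rw [expVal_proj_eq_normsq hsa hproj]
  refine ⟨sq_nonneg _, ?_⟩
  have h2 : ‖E ψ‖ ^ 2 = (⟪ψ, E ψ⟫_ℂ).re := (expVal_proj_eq_normsq hsa hproj ψ).symm
  have h3 : (⟪ψ, E ψ⟫_ℂ).re ≤ ‖(⟪ψ, E ψ⟫_ℂ)‖ := Complex.re_le_norm _
  have h4 : ‖(⟪ψ, E ψ⟫_ℂ)‖ ≤ ‖ψ‖ * ‖E ψ‖ := norm_inner_le_norm _ _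
  rw [hψ, one_mul] at h4
  have h5 : ‖E ψ‖ ^ 2 ≤ ‖E ψ‖ := by
    calc ‖E ψ‖ ^ 2 = (⟪ψ, E ψ⟫_ℂ).re := h2
      _ ≤ ‖E ψ‖ := le_trans h3 h4
  nlinarith [norm_nonneg (E ψ)]

/-- The operator `b(E)` for a projection `E`. -/
def bfcOp (b : ℝ → ℝ) (E : H →L[ℂ] H) : H →L[ℂ] H :=
  ((b 0 : ℝ) : ℂ) • (1 : H →L[ℂ] H) + ((b 1 - b 0 : ℝ) : ℂ) • E

lemma bfcOp_selfAdjoint (b : ℝ → ℝ) {E : H →L[ℂ] H} (hsa : IsSelfAdjoint E) :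
    IsSelfAdjoint (bfcOp b E) := by
  have hr0 : IsSelfAdjoint ((b 0 : ℝ) : ℂ) := Complex.conj_ofReal _
  have hr1 : IsSelfAdjoint ((b 1 - b 0 : ℝ) : ℂ) := Complex.conj_ofReal _
  exact (IsSelfAdjoint.smul hr0 (IsSelfAdjoint.one _)).add (IsSelfAdjoint.smul hr1 hsa)

lemma expVal_bfcOp (b : ℝ → ℝ) (E : H →L[ℂ] H) {ψ : H} (hψ : ‖ψ‖ = 1) :
    expVal (bfcOp b E) ψ = b 0 + (b 1 - b 0) * expVal E ψ := by
  have happ : bfcOp b E ψ = ((b 0 : ℝ) : ℂ) • ψ + ((b 1 - b 0 : ℝ) : ℂ) • E ψ := by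
    simp [bfcOp]
  rw [expVal, happ, inner_add_right, inner_smul_right, inner_smul_right,
    inner_self_eq_norm_sq_to_K, hψ]
  simp [expVal, Complex.re_ofReal_mul]

/-- The mean value of `E` on the line through `x`. -/
def projMean (E : H →L[ℂ] H) (x : H) : ℝ := (⟪x, E x⟫_ℂ).re / ‖x‖ ^ 2

/-- The hidden proposition associated to a projection `E`. -/
def hiddenSet (E : H →L[ℂ] H) : Set H :=
  {x : H | x ≠ 0 ∧ angArg (⟪uvec x, x⟫_ℂ) ∈ arc (projMean E x)}

lemma hiddenSet_preimage (E : H →L[ℂ] H) {ψ : H} (hψ : ‖ψ‖ = 1) :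
    (fun z : ℂ => z • ψ) ⁻¹' hiddenSet E
      = {z : ℂ | z ≠ 0 ∧ angArg (z * ⟪uvec ψ, ψ⟫_ℂ) ∈ arc (expVal E ψ)} := by
  have hψ0 : ψ ≠ 0 := by intro h; rw [h] at hψ; simp at hψ
  ext z
  by_cases hz : z = 0
  · subst hz
    simp [hiddenSet]
  · have hzψ : z • ψ ≠ 0 := smul_ne_zero hz hψ0
    have huv : uvec (z • ψ) = uvec ψ := uvec_smul hψ0 hz
    have hco : ⟪uvec (z • ψ), z • ψ⟫_ℂ = z * ⟪uvec ψ, ψ⟫_ℂ := by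
      rw [huv]; exact (line_coord hψ).2 z
    have hpm : projMean E (z • ψ) = expVal E ψ := by
      have hEz : E (z • ψ) = z • E ψ := map_smul E z ψ
      have hnz : ‖z‖ ≠ 0 := norm_ne_zero_iff.mpr hz
      have hinz : (⟪z • ψ, E (z • ψ)⟫_ℂ) = ((‖z‖ ^ 2 : ℝ) : ℂ) * ⟪ψ, E ψ⟫_ℂ := by
        rw [hEz, inner_smul_left, inner_smul_right, ← mul_assoc,
          mul_comm ((starRingEnd ℂ) z) z, Complex.mul_conj]
        norm_cast
        rw [Complex.normSq_eq_norm_sq]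
      rw [projMean, hinz, Complex.re_ofReal_mul, norm_smul, hψ, mul_one, expVal]
      exact mul_div_cancel_left₀ _ (pow_ne_zero 2 hnz)
    simp only [mem_preimage, hiddenSet, mem_setOf_eq, hco, hpm]
    exact ⟨fun h => ⟨hz, h.2⟩, fun h => ⟨hzψ, h.2⟩⟩

lemma hiddenSet_preimage_measurable (E : H →L[ℂ] H) {ψ : H} (hψ : ‖ψ‖ = 1) :
    MeasurableSet ((fun z : ℂ => z • ψ) ⁻¹' hiddenSet E) := by
  rw [hiddenSet_preimage E hψ]
  exact (measurableSet_singleton (0:ℂ)).compl.inter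
    ((measurable_angArg.comp (measurable_mul_const _)) (measurable_arc _))

lemma hiddenSet_mass {η : Measure ℂ} (hη : IsEta η) {E : H →L[ℂ] H}
    (hsa : IsSelfAdjoint E) (hproj : E * E = E) {ψ : H} (hψ : ‖ψ‖ = 1) :
    η ((fun z : ℂ => z • ψ) ⁻¹' hiddenSet E) = ENNReal.ofReal (expVal E ψ) := by
  obtain ⟨hp0, hp1⟩ := expVal_proj_mem hsa hproj hψ
  rw [hiddenSet_preimage E hψ,
    eta_sector hη (measurable_arc (expVal E ψ)) (line_coord hψ).1,
    circMeasure_arc hη hp0 hp1]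

lemma hiddenSet_integral {η : Measure ℂ} (hη : IsEta η) {E : H →L[ℂ] H}
    (hsa : IsSelfAdjoint E) (hproj : E * E = E) {ψ : H} (hψ : ‖ψ‖ = 1) (b : ℝ → ℝ) :
    ∫ z : ℂ, b (chi (hiddenSet E) (z • ψ)) ∂η
      = b 0 + (b 1 - b 0) * expVal E ψ := by
  haveI := hη.1
  set P := (fun z : ℂ => z • ψ) ⁻¹' hiddenSet E with hP
  have hPmeas : MeasurableSet P := hiddenSet_preimage_measurable E hψ
  have hpt : (fun z : ℂ => b (chi (hiddenSet E) (z • ψ)))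
      = fun z : ℂ => b 0 + (b 1 - b 0) * P.indicator (fun _ => (1:ℝ)) z := by
    funext z
    by_cases h : z ∈ P
    · have h1 : chi (hiddenSet E) (z • ψ) = 1 := by
        simp [chi, Set.indicator_apply, h, hP]
        exact h
      rw [h1, Set.indicator_of_mem h]
      ring
    · have h1 : chi (hiddenSet E) (z • ψ) = 0 := by
        simp [chi, Set.indicator_apply]
        intro hmem
        exact absurd hmem h
      rw [h1, Set.indicator_of_notMem h]
      ring
  rw [hpt]
  have hindint : Integrable (P.indicator (fun _ => (1:ℝ))) η :=
    (integrable_const (1:ℝ)).indicator hPmeas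
  rw [integral_add (integrable_const _) (hindint.const_mul _), integral_const_mul,
    integral_const, integral_indicator_const (1:ℝ) hPmeas, measureReal_def η P,
    hiddenSet_mass hη hsa hproj hψ, ENNReal.toReal_ofReal (expVal_proj_mem hsa hproj hψ).1]
  simp

end Stmt5Aux

variable [TopologicalSpace.SeparableSpace H]


theorem stmt5 (hdim : ¬ FiniteDimensional ℂ H) (η : Measure ℂ) (hη : IsEta η)
    (E : H →L[ℂ] H) (hE : IsProjection E) :
    ∃ L : Set H, HiddenProp η L E := by
  obtain ⟨hsa, hproj⟩ := hE
  refine ⟨hiddenSet E, ?_, ?_⟩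
  · -- OrthodoxMean η (chi (hiddenSet E)) E
    refine ⟨?_, ?_, hsa, ?_⟩
    · intro B hB ψ hψ
      have hsplit : (fun z : ℂ => z • ψ) ⁻¹' (chi (hiddenSet E) ⁻¹' B)
          = ((fun z : ℂ => z • ψ) ⁻¹' hiddenSet E ∩ {z : ℂ | (1:ℝ) ∈ B})
            ∪ (((fun z : ℂ => z • ψ) ⁻¹' hiddenSet E)ᶜ ∩ {z : ℂ | (0:ℝ) ∈ B}) := by
        ext z
        by_cases h : z • ψ ∈ hiddenSet E <;>
          simp [chi, Set.indicator_apply, h]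
      rw [hsplit]
      exact ((hiddenSet_preimage_measurable E hψ).inter (MeasurableSet.const _)).union
        ((hiddenSet_preimage_measurable E hψ).compl.inter (MeasurableSet.const _))
    · refine ⟨∅, ⟨fun ψ _ => by simp, fun ψ _ => by simp [lineMass]⟩, 1, fun x _ => ?_⟩
      by_cases h : x ∈ hiddenSet E <;> simp [chi, Set.indicator_apply, h]
    · intro ψ hψ
      have h := hiddenSet_integral hη hsa hproj hψ (fun r : ℝ => r)
      simpa [lineIntegral] using h
  · intro b hb
    refine ⟨bfcOp b E, ⟨bfcOp_selfAdjoint b hsa, fun ψ hψ ν hν => ?_⟩, ?_, ?_, ?_, ?_⟩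
    · rw [spec_integral hproj hν b, expVal_bfcOp b E hψ]
    · intro B hB ψ hψ
      have hsplit : (fun z : ℂ => z • ψ) ⁻¹' ((b ∘ chi (hiddenSet E)) ⁻¹' B)
          = ((fun z : ℂ => z • ψ) ⁻¹' hiddenSet E ∩ {z : ℂ | b 1 ∈ B})
            ∪ (((fun z : ℂ => z • ψ) ⁻¹' hiddenSet E)ᶜ ∩ {z : ℂ | b 0 ∈ B}) := by
        ext z
        by_cases h : z • ψ ∈ hiddenSet E <;>
          simp [chi, Set.indicator_apply, h, Function.comp]
      rw [hsplit]
      exact ((hiddenSet_preimage_measurable E hψ).inter (MeasurableSet.const _)).union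
        ((hiddenSet_preimage_measurable E hψ).compl.inter (MeasurableSet.const _))
    · refine ⟨∅, ⟨fun ψ _ => by simp, fun ψ _ => by simp [lineMass]⟩,
        |b 0| + |b 1|, fun x _ => ?_⟩
      by_cases h : x ∈ hiddenSet E
      · simp only [Function.comp_apply, chi, Set.indicator_of_mem h]
        exact le_add_of_nonneg_left (abs_nonneg _)
      · simp only [Function.comp_apply, chi, Set.indicator_of_notMem h, abs_zero]
        exact le_add_of_nonneg_right (abs_nonneg _)
    · exact bfcOp_selfAdjoint b hsa
    · intro ψ hψ
      have h := hiddenSet_integral hη hsa hproj hψ b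
      rw [lineIntegral, expVal_bfcOp b E hψ]
      simpa [Function.comp] using h


end HiddenVar
end
end
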